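/- arXiv:1102.2904 — 4 statements merged into one kernel-verified Lean document; each statement's English description precedes it below -/
import Mathlib

section
/- In the symmetric model, for every x ≥ 0 the SINR of a single user satisfies the closed-form tail probability P(α_1/(1+β_1) > x) = e^{−x/ρ} · (1+x)^{−N}. -/
open MeasureTheory ProbabilityTheory Filter Real


open Set in
lemma expMeasure_Iio_zero : expMeasure 1 (Set.Iio 0) = 0 := by
  rw [expMeasure, gammaMeasure, withDensity_apply _ measurableSet_Iio,
    lintegral_gammaPDF_of_nonpos le_rfl]

open Set in
lemma expMeasure_Ioi {t : ℝ} (ht : 0 ≤ t) :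
    expMeasure 1 (Set.Ioi t) = ENNReal.ofReal (Real.exp (-t)) := by
  have hP : IsProbabilityMeasure (expMeasure 1) := isProbabilityMeasure_expMeasure one_pos
  have hcdf : (expMeasure 1 (Set.Iic t)).toReal = 1 - Real.exp (-t) := by
    have := cdf_expMeasure_eq one_pos t
    rw [cdf_eq_real, measureReal_def] at this
    simpa [ht, one_mul] using this
  have hIic : expMeasure 1 (Set.Iic t) = ENNReal.ofReal (1 - Real.exp (-t)) := by
    rw [← hcdf, ENNReal.ofReal_toReal (measure_ne_top _ _)]
  have hcompl : Set.Ioi t = (Set.Iic t)ᶜ := by ext u; simp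
  rw [hcompl, measure_compl measurableSet_Iic (measure_ne_top _ _), hIic, measure_univ,
    ← ENNReal.ofReal_one, ← ENNReal.ofReal_sub _ (sub_nonneg.2 (Real.exp_le_one_iff.mpr (by linarith)))]
  norm_num

open Set in
lemma integral_exp_expMeasure {x : ℝ} (hx : 0 ≤ x) :
    ∫ u, Real.exp (-x * u) ∂(expMeasure 1) = (1 + x)⁻¹ := by
  have hx1 : (0:ℝ) < 1 + x := by linarith
  have hmeas : Measurable fun u : ℝ => Real.exp (-x * u) :=
    (measurable_id.const_mul (-x)).exp
  have hval : ∫ u in Ioi (0:ℝ), Real.exp (-(1 + x) * u) = (1 + x)⁻¹ := by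
    have := integral_rpow_mul_exp_neg_mul_Ioi (zero_lt_one) hx1
    simp only [sub_self, Real.rpow_zero, one_mul, Real.rpow_one, Real.Gamma_one,
      mul_one, one_div, neg_mul] at this ⊢
    exact this
  have key : ∫⁻ u, ENNReal.ofReal (Real.exp (-x * u)) ∂(expMeasure 1)
      = ENNReal.ofReal (1 + x)⁻¹ := by
    have hpdf : Measurable (gammaPDF 1 1) := (measurable_gammaPDFReal 1 1).ennreal_ofReal
    rw [expMeasure, gammaMeasure,
      lintegral_withDensity_eq_lintegral_mul _ hpdf hmeas.ennreal_ofReal]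
    have hfun : ∀ u : ℝ, (gammaPDF 1 1 * fun u => ENNReal.ofReal (Real.exp (-x * u))) u
        = Set.indicator (Ici (0:ℝ)) (fun u => ENNReal.ofReal (Real.exp (-(1 + x) * u))) u := by
      intro u
      rcases le_or_gt 0 u with h | h
      · rw [Set.indicator_of_mem (Set.mem_Ici.2 h)]
        show gammaPDF 1 1 u * ENNReal.ofReal (Real.exp (-x * u)) = _
        rw [show gammaPDF 1 1 u = exponentialPDF 1 u from rfl, exponentialPDF_of_nonneg h,
          ← ENNReal.ofReal_mul (by positivity)]
        congr 1
        rw [one_mul, ← Real.exp_add]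
        ring_nf
      · show gammaPDF 1 1 u * ENNReal.ofReal (Real.exp (-x * u)) = _
        rw [Set.indicator_of_notMem (by simpa using not_le.2 h), gammaPDF_of_neg h, zero_mul]
    rw [lintegral_congr hfun, lintegral_indicator measurableSet_Ici _,
      ← setLIntegral_congr (Ioi_ae_eq_Ici (a := (0:ℝ))),
      ← ofReal_integral_eq_lintegral_ofReal
        ((exp_neg_integrableOn_Ioi 0 hx1).congr_fun (fun u _ => rfl) measurableSet_Ioi)
        (Filter.Eventually.of_forall fun u => (Real.exp_pos _).le),
      hval]
  rw [MeasureTheory.integral_eq_lintegral_of_nonneg_ae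
      (Filter.Eventually.of_forall fun u => (Real.exp_pos _).le) hmeas.aestronglyMeasurable,
    key, ENNReal.toReal_ofReal (by positivity)]


/-- The maximum of `f k` over the indices `k ∈ {1, …, n}`. -/
noncomputable def maxIcc (n : ℕ) (f : ℕ → ℝ) : ℝ :=
  ⨆ k : (Finset.Icc 1 n : Finset ℕ), f k

/-- In the symmetric model, for every `x ≥ 0` the SINR of a single user satisfies
`P(α₁/(1+β₁) > x) = exp (-x/ρ) * (1+x)^(-N)`. -/
theorem sinr_tail_closed_form
    {Ω : Type*} [MeasurableSpace Ω] (P : Measure Ω) [IsProbabilityMeasure P]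
    (N : ℕ) (hN : 1 ≤ N) (ρ : ℝ) (hρ : 0 < ρ)
    (G : Option (Fin N) × ℕ → Ω → ℝ) (hGmeas : ∀ i, Measurable (G i))
    (hGindep : iIndepFun G P)
    (hGdist : ∀ i, Measure.map (G i) P = expMeasure 1)
    (α β : ℕ → Ω → ℝ)
    (hα : ∀ k ω, α k ω = ρ * G (none, k) ω)
    (hβ : ∀ k ω, β k ω = ρ * ∑ j : Fin N, G (some j, k) ω) :
    ∀ x : ℝ, 0 ≤ x →
      (P {ω | x < α 1 ω / (1 + β 1 ω)}).toReal
        = Real.exp (-x / ρ) * ((1 + x) ^ N)⁻¹ := by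
  classical
  intro x hx
  set c : ℝ := x / ρ with hc
  have hc0 : 0 ≤ c := div_nonneg hx hρ.le
  have hcρ : ρ * c = x := by rw [hc, mul_div_assoc', mul_div_cancel_left₀ x hρ.ne']
  set S : Ω → ℝ := fun ω => ∑ j : Fin N, G (some j, 1) ω with hS
  have hXm : Measurable (G (none, 1)) := hGmeas _
  have hSm : Measurable S := Finset.measurable_sum _ fun j _ => hGmeas _
  set s : Finset (Option (Fin N) × ℕ) :=
    Finset.univ.image (fun j : Fin N => ((some j : Option (Fin N)), 1)) with hs
  have hnot : ((none : Option (Fin N)), 1) ∉ s := by simp [hs]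
  have hinj : ∀ a ∈ (Finset.univ : Finset (Fin N)), ∀ b ∈ Finset.univ,
      ((some a : Option (Fin N)), 1) = ((some b : Option (Fin N)), 1) → a = b := by
    intro a _ b _ h
    simpa using h
  have hsum : (∑ i ∈ s, G i) = S := by
    rw [hs, Finset.sum_image hinj]
    funext ω
    simp [hS, Finset.sum_apply]
  -- a.e. nonnegativity
  have hae : ∀ i, ∀ᵐ ω ∂P, 0 ≤ G i ω := by
    intro i
    have h0 : P (G i ⁻¹' Set.Iio 0) = 0 := by
      have hmapp := Measure.map_apply (μ := P) (hGmeas i) (measurableSet_Iio (a := (0:ℝ)))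
      rw [hGdist i, expMeasure_Iio_zero] at hmapp
      exact hmapp.symm
    refine (MeasureTheory.ae_iff).2 ?_
    simpa [Set.preimage, not_le] using h0
  have hSpos : ∀ᵐ ω ∂P, 0 ≤ S ω := by
    have hall : ∀ᵐ ω ∂P, ∀ j : Fin N, 0 ≤ G (some j, 1) ω := ae_all_iff.2 fun j => hae _
    filter_upwards [hall] with ω hω
    exact Finset.sum_nonneg fun j _ => hω j
  -- rewrite the event
  have hev : P {ω | x < α 1 ω / (1 + β 1 ω)} = P {ω | c + x * S ω < G (none, 1) ω} := by
    apply measure_congr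
    rw [Filter.eventuallyEq_set]
    filter_upwards [hSpos] with ω hω
    have hD : 0 < 1 + ρ * S ω := by nlinarith
    simp only [Set.mem_setOf_eq, hα, hβ]
    rw [show (∑ j : Fin N, G (some j, 1) ω) = S ω from rfl, lt_div_iff₀ hD]
    constructor <;> intro h <;> nlinarith [hcρ, hρ]
  -- independence
  have hind : IndepFun S (G (none, 1)) P := by
    have h := hGindep.indepFun_finset_sum_of_notMem hGmeas hnot
    rwa [hsum] at h
  have hmap : P.map (fun ω => (S ω, G (none, 1) ω)) = (P.map S).prod (P.map (G (none, 1))) :=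
    (indepFun_iff_map_prod_eq_prod_map_map hSm.aemeasurable hXm.aemeasurable).mp hind
  have hsetm : MeasurableSet {p : ℝ × ℝ | c + x * p.1 < p.2} :=
    measurableSet_lt (measurable_const.add (measurable_fst.const_mul x)) measurable_snd
  haveI : IsProbabilityMeasure (expMeasure 1) := isProbabilityMeasure_expMeasure one_pos
  have hPB : P {ω | c + x * S ω < G (none, 1) ω}
      = ∫⁻ u, expMeasure 1 (Set.Ioi (c + x * u)) ∂(P.map S) := by
    have hpre : {ω | c + x * S ω < G (none, 1) ω}
        = (fun ω => (S ω, G (none, 1) ω)) ⁻¹' {p : ℝ × ℝ | c + x * p.1 < p.2} := rfl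
    rw [hpre, ← Measure.map_apply (hSm.prodMk hXm) hsetm, hmap, hGdist,
      Measure.prod_apply hsetm]
    refine lintegral_congr fun u => ?_
    congr 1
  have hmae : ∀ᵐ u ∂(P.map S), 0 ≤ u := by
    rw [ae_map_iff hSm.aemeasurable measurableSet_Ici]
    exact hSpos
  have h2 : ∫⁻ u, expMeasure 1 (Set.Ioi (c + x * u)) ∂(P.map S)
      = ∫⁻ u, ENNReal.ofReal (Real.exp (-(c + x * u))) ∂(P.map S) := by
    refine lintegral_congr_ae ?_
    filter_upwards [hmae] with u hu
    rw [expMeasure_Ioi (add_nonneg hc0 (mul_nonneg hx hu))]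
  have h3 : ∫⁻ u, ENNReal.ofReal (Real.exp (-(c + x * u))) ∂(P.map S)
      = ENNReal.ofReal (Real.exp (-c)) * ∫⁻ ω, ENNReal.ofReal (Real.exp (-x * S ω)) ∂P := by
    rw [lintegral_map (f := fun u : ℝ => ENNReal.ofReal (Real.exp (-(c + x * u)))) (by fun_prop) hSm,
      ← lintegral_const_mul _ ((hSm.const_mul (-x)).exp.ennreal_ofReal)]
    refine lintegral_congr fun ω => ?_
    rw [← ENNReal.ofReal_mul (Real.exp_pos _).le, ← Real.exp_add]
    congr 2
    ring
  have hMS : Measurable fun ω => Real.exp (-x * S ω) := (hSm.const_mul (-x)).exp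
  have hbound : Integrable (fun ω => Real.exp (-x * S ω)) P := by
    refine Integrable.mono' (integrable_const 1) hMS.aestronglyMeasurable ?_
    filter_upwards [hSpos] with ω hω
    rw [Real.norm_eq_abs, abs_of_pos (Real.exp_pos _)]
    exact Real.exp_le_one_iff.mpr (by nlinarith)
  have h4 : ∫⁻ ω, ENNReal.ofReal (Real.exp (-x * S ω)) ∂P
      = ENNReal.ofReal ((1 + x)⁻¹ ^ N) := by
    rw [← ofReal_integral_eq_lintegral_ofReal hbound
        (Filter.Eventually.of_forall fun ω => (Real.exp_pos _).le)]
    congr 1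
    have hmg : Measurable fun u : ℝ => Real.exp (-x * u) := by fun_prop
    have hval : ∀ i, mgf (G i) P (-x) = (1 + x)⁻¹ := by
      intro i
      show ∫ ω, Real.exp (-x * G i ω) ∂P = (1 + x)⁻¹
      calc ∫ ω, Real.exp (-x * G i ω) ∂P
          = ∫ u, Real.exp (-x * u) ∂(Measure.map (G i) P) :=
            (integral_map (hGmeas i).aemeasurable hmg.aestronglyMeasurable).symm
        _ = (1 + x)⁻¹ := by rw [hGdist i]; exact integral_exp_expMeasure hx
    have hm : mgf S P (-x) = (1 + x)⁻¹ ^ N := by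
      have h := hGindep.mgf_sum hGmeas s (t := -x)
      rw [hsum] at h
      rw [h, hs, Finset.prod_image hinj]
      simp [hval]
    simpa [mgf] using hm
  rw [hev, hPB, h2, h3, h4, ENNReal.toReal_mul,
    ENNReal.toReal_ofReal (Real.exp_pos _).le, ENNReal.toReal_ofReal (by positivity)]
  rw [hc, neg_div, inv_pow]
end

section
/- In the symmetric model, the max-SINR value Γ_n = max_{1≤k≤n} α_k/(1+β_k) satisfies log P(Γ_n ≤ ρ·log n − ρ·(N+1)·log(log n)) / log n → −ρ^{−N} as n → ∞; in particular when ρ = 1 this probability is n^{−1+o(1)}. -/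
open MeasureTheory ProbabilityTheory Filter Real

section MaxSINRAux

open Set
open scoped ENNReal NNReal

lemma expMeasure_apply {s : Set ℝ} (hs : MeasurableSet s) :
    expMeasure 1 s = ∫⁻ x in s, exponentialPDF 1 x := by
  rw [expMeasure, gammaMeasure, withDensity_apply _ hs]; rfl

lemma expMeasure_one_Ioi {c : ℝ} (hc : 0 ≤ c) :
    expMeasure 1 (Ioi c) = ENNReal.ofReal (exp (-c)) := by
  rw [expMeasure_apply measurableSet_Ioi]
  have h1 : ∫⁻ x in Ioi c, exponentialPDF 1 x = ∫⁻ x in Ioi c, ENNReal.ofReal (exp (-x)) := by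
    apply setLIntegral_congr_fun measurableSet_Ioi
    intro x (hx : c < x)
    rw [exponentialPDF_of_nonneg (le_trans hc hx.le)]
    norm_num
  rw [h1, ← ofReal_integral_eq_lintegral_ofReal
    ((exp_neg_integrableOn_Ioi c one_pos).congr_fun (fun x _ => by norm_num) measurableSet_Ioi)
    (ae_of_all _ fun x => (exp_pos _).le), integral_exp_neg_Ioi]

lemma expMeasure_one_Iio : expMeasure 1 (Iio 0) = 0 := by
  rw [expMeasure_apply measurableSet_Iio]
  exact ProbabilityTheory.lintegral_exponentialPDF_of_nonpos le_rfl

lemma lintegral_exp_neg_expMeasure {τ : ℝ} (hτ : 0 ≤ τ) :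
    ∫⁻ x, ENNReal.ofReal (exp (-(τ * x))) ∂(expMeasure 1) = ENNReal.ofReal ((1 + τ)⁻¹) := by
  have hmeas : Measurable fun x : ℝ => ENNReal.ofReal (exp (-(τ * x))) := by fun_prop
  have h1τ : (0:ℝ) < 1 + τ := by linarith
  have hpdfm : Measurable (exponentialPDF 1) := (measurable_exponentialPDFReal 1).ennreal_ofReal
  rw [show expMeasure 1 = volume.withDensity (exponentialPDF 1) from rfl,
    lintegral_withDensity_eq_lintegral_mul _ hpdfm hmeas]
  rw [← lintegral_add_compl _ (measurableSet_Ici (a := (0:ℝ)))]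
  have h2 : ∫⁻ x in (Ici (0:ℝ))ᶜ,
      (exponentialPDF 1 * fun x => ENNReal.ofReal (exp (-(τ * x)))) x = 0 := by
    have : ∀ x ∈ (Ici (0:ℝ))ᶜ,
        (exponentialPDF 1 * fun x => ENNReal.ofReal (exp (-(τ * x)))) x = 0 := by
      intro x hx
      have hx0 : x < 0 := by simpa using hx
      simp [Pi.mul_apply, exponentialPDF_of_neg hx0]
    rw [setLIntegral_congr_fun (measurableSet_Ici (a := (0:ℝ))).compl this]
    simp
  rw [h2, add_zero]
  have h3 : ∫⁻ x in Ici (0:ℝ), (exponentialPDF 1 * fun x => ENNReal.ofReal (exp (-(τ * x)))) x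
      = ∫⁻ x in Ici (0:ℝ), ENNReal.ofReal (exp (-((1+τ) * x))) := by
    apply setLIntegral_congr_fun measurableSet_Ici
    intro x hx
    have hx0 : (0:ℝ) ≤ x := hx
    rw [Pi.mul_apply, exponentialPDF_of_nonneg hx0, ← ENNReal.ofReal_mul (by positivity)]
    rw [one_mul, ← Real.exp_add]
    ring_nf
  have h4 : ∫⁻ x in Ici (0:ℝ), ENNReal.ofReal (exp (-((1+τ) * x)))
      = ∫⁻ x in Ioi (0:ℝ), ENNReal.ofReal (exp (-((1+τ) * x))) :=
    setLIntegral_congr (Ioi_ae_eq_Ici (a := (0:ℝ))).symm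
  rw [h3, h4, ← ofReal_integral_eq_lintegral_ofReal
    ((exp_neg_integrableOn_Ioi 0 h1τ).congr_fun (fun x _ => by ring_nf) measurableSet_Ioi)
    (ae_of_all _ fun x => (exp_pos _).le)]
  congr 1
  have key := integral_comp_mul_left_Ioi (fun x => exp (-x)) 0 h1τ
  simp only [mul_zero] at key
  rw [key, integral_exp_neg_Ioi]
  simp
variable {Ω : Type*} [MeasurableSpace Ω] {P : Measure Ω} [IsProbabilityMeasure P]

lemma laplace_sum (N : ℕ) (G : Option (Fin N) × ℕ → Ω → ℝ) (hGmeas : ∀ i, Measurable (G i))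
    (hGindep : iIndepFun G P)
    (hGdist : ∀ i, Measure.map (G i) P = expMeasure 1)
    (k : ℕ) {τ : ℝ} (hτ : 0 ≤ τ)
    (hE : ∫⁻ x, ENNReal.ofReal (exp (-(τ * x))) ∂(expMeasure 1) = ENNReal.ofReal ((1 + τ)⁻¹))
    (s : Finset (Fin N)) :
    ∫⁻ ω, ENNReal.ofReal (exp (-(τ * ∑ j ∈ s, G (some j, k) ω))) ∂P
      = ENNReal.ofReal ((1 + τ)⁻¹) ^ s.card := by
  classical
  induction s using Finset.induction_on with
  | empty => simp
  | @insert a s ha IH =>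
    have hsplit : ∀ ω, ENNReal.ofReal (exp (-(τ * ∑ j ∈ insert a s, G (some j, k) ω)))
        = ENNReal.ofReal (exp (-(τ * G (some a, k) ω)))
          * ENNReal.ofReal (exp (-(τ * ∑ j ∈ s, G (some j, k) ω))) := by
      intro ω
      rw [Finset.sum_insert ha, ← ENNReal.ofReal_mul (exp_pos _).le, ← Real.exp_add]
      ring_nf
    have hfm : Measurable (fun ω => ENNReal.ofReal (exp (-(τ * G (some a, k) ω)))) := by
      fun_prop
    have hgm : Measurable (fun ω => ENNReal.ofReal (exp (-(τ * ∑ j ∈ s, G (some j, k) ω)))) := by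
      apply Measurable.ennreal_ofReal
      apply Real.measurable_exp.comp
      apply Measurable.neg
      apply Measurable.const_mul
      exact Finset.measurable_sum s (fun j _ => hGmeas (some j, k))
    have hd : Disjoint ({(some a, k)} : Finset (Option (Fin N) × ℕ))
        (s.image (fun j => (some j, k))) := by
      simp only [Finset.disjoint_left, Finset.mem_singleton, Finset.mem_image]
      rintro x rfl ⟨j, hj, hjeq⟩
      simp only [Prod.mk.injEq, Option.some.injEq] at hjeq
      exact ha (hjeq.1 ▸ hj)
    have base := hGindep.indepFun_finset _ _ hd hGmeas
    have hφ : Measurable (fun x : (({(some a, k)} : Finset (Option (Fin N) × ℕ)) → ℝ) =>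
        ENNReal.ofReal (exp (-(τ * x ⟨(some a, k), Finset.mem_singleton_self _⟩)))) := by
      fun_prop
    have hψ : Measurable (fun x : ((s.image (fun j => (some j, k)) : Finset (Option (Fin N) × ℕ)) → ℝ) =>
        ENNReal.ofReal (exp (-(τ * ∑ j ∈ s.attach,
          x ⟨(some j.1, k), Finset.mem_image_of_mem _ j.2⟩)))) := by
      apply Measurable.ennreal_ofReal
      apply Real.measurable_exp.comp
      apply Measurable.neg
      apply Measurable.const_mul
      exact Finset.measurable_sum _ (fun j _ => measurable_pi_apply _)
    have hindep : IndepFun (fun ω => ENNReal.ofReal (exp (-(τ * G (some a, k) ω))))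
        (fun ω => ENNReal.ofReal (exp (-(τ * ∑ j ∈ s, G (some j, k) ω)))) P := by
      have h2 := base.comp hφ hψ
      have e2 : ((fun x : ((s.image (fun j => (some j, k)) : Finset (Option (Fin N) × ℕ)) → ℝ) =>
          ENNReal.ofReal (exp (-(τ * ∑ j ∈ s.attach,
            x ⟨(some j.1, k), Finset.mem_image_of_mem _ j.2⟩))))
            ∘ (fun ω (i : (s.image (fun j => (some j, k)) : Finset (Option (Fin N) × ℕ))) => G i ω))
          = (fun ω => ENNReal.ofReal (exp (-(τ * ∑ j ∈ s, G (some j, k) ω)))) := by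
        funext ω
        simp only [Function.comp_apply]
        rw [Finset.sum_attach s (fun j => G (some j, k) ω)]
      rwa [e2] at h2
    have hfint : ∫⁻ ω, ENNReal.ofReal (exp (-(τ * G (some a, k) ω))) ∂P
        = ENNReal.ofReal ((1 + τ)⁻¹) := by
      have hmap := lintegral_map (μ := P) (f := fun x : ℝ => ENNReal.ofReal (exp (-(τ * x))))
        (g := G (some a, k)) (by fun_prop) (hGmeas _)
      rw [hGdist] at hmap
      rw [← hmap]; exact hE
    calc ∫⁻ ω, ENNReal.ofReal (exp (-(τ * ∑ j ∈ insert a s, G (some j, k) ω))) ∂P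
        = ∫⁻ ω, ((fun ω => ENNReal.ofReal (exp (-(τ * G (some a, k) ω))))
            * (fun ω => ENNReal.ofReal (exp (-(τ * ∑ j ∈ s, G (some j, k) ω))))) ω ∂P := by
          apply lintegral_congr; intro ω; rw [hsplit ω]; rfl
      _ = (∫⁻ ω, ENNReal.ofReal (exp (-(τ * G (some a, k) ω))) ∂P)
            * ∫⁻ ω, ENNReal.ofReal (exp (-(τ * ∑ j ∈ s, G (some j, k) ω))) ∂P :=
          lintegral_mul_eq_lintegral_mul_lintegral_of_indepFun hfm hgm hindep
      _ = ENNReal.ofReal ((1 + τ)⁻¹) ^ (insert a s).card := by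
          rw [IH, hfint, Finset.card_insert_of_notMem ha, pow_succ]
          ring

lemma G_nonneg_ae {ι : Type*} (G : ι → Ω → ℝ) (hGmeas : ∀ i, Measurable (G i))
    (hGdist : ∀ i, Measure.map (G i) P = expMeasure 1)
    (hIio : expMeasure 1 (Iio 0) = 0) (i : ι) :
    ∀ᵐ ω ∂P, 0 ≤ G i ω := by
  rw [ae_iff]
  have h : {ω | ¬ 0 ≤ G i ω} = G i ⁻¹' (Iio 0) := by ext ω; simp [not_le]
  rw [h, ← Measure.map_apply (hGmeas i) measurableSet_Iio, hGdist i, hIio]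

lemma tail_prob (N : ℕ) (ρ : ℝ) (hρ : 0 < ρ)
    (G : Option (Fin N) × ℕ → Ω → ℝ) (hGmeas : ∀ i, Measurable (G i))
    (hGindep : iIndepFun G P)
    (hGdist : ∀ i, Measure.map (G i) P = expMeasure 1)
    (hIoi : ∀ c : ℝ, 0 ≤ c → expMeasure 1 (Ioi c) = ENNReal.ofReal (exp (-c)))
    (hIio : expMeasure 1 (Iio 0) = 0)
    (hE : ∀ τ : ℝ, 0 ≤ τ → ∫⁻ x, ENNReal.ofReal (exp (-(τ * x))) ∂(expMeasure 1)
        = ENNReal.ofReal ((1 + τ)⁻¹))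
    (hLP : ∀ (k : ℕ) (τ : ℝ), 0 ≤ τ → (∀ s : Finset (Fin N),
      ∫⁻ ω, ENNReal.ofReal (exp (-(τ * ∑ j ∈ s, G (some j, k) ω))) ∂P
        = ENNReal.ofReal ((1 + τ)⁻¹) ^ s.card))
    (k : ℕ) {τ : ℝ} (hτ : 0 ≤ τ) :
    P {ω | τ * (1 + ρ * ∑ j : Fin N, G (some j, k) ω) < ρ * G (none, k) ω}
      = ENNReal.ofReal (exp (-(τ/ρ)) * ((1 + τ)^N)⁻¹) := by
  classical
  set X : Ω → ℝ := G (none, k) with hX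
  set S : Ω → ℝ := fun ω => ∑ j : Fin N, G (some j, k) ω with hS
  have hXm : Measurable X := hGmeas _
  have hSm : Measurable S := Finset.measurable_sum _ (fun j _ => hGmeas (some j, k))
  -- independence of S and X
  have hindep : IndepFun S X P := by
    have hd : Disjoint ((Finset.univ : Finset (Fin N)).image (fun j => (some j, k)))
        ({(none, k)} : Finset (Option (Fin N) × ℕ)) := by
      simp only [Finset.disjoint_right, Finset.mem_singleton, Finset.mem_image]
      rintro x rfl ⟨j, _, hjeq⟩
      simp at hjeq
    have base := hGindep.indepFun_finset _ _ hd hGmeas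
    have hφ : Measurable (fun x : (((Finset.univ : Finset (Fin N)).image (fun j => (some j, k))
          : Finset (Option (Fin N) × ℕ)) → ℝ) =>
        ∑ j : Fin N, x ⟨(some j, k), Finset.mem_image_of_mem _ (Finset.mem_univ j)⟩) :=
      Finset.measurable_sum _ (fun j _ => measurable_pi_apply _)
    have hψ : Measurable (fun x : ((({(none, k)} : Finset (Option (Fin N) × ℕ))) → ℝ) =>
        x ⟨(none, k), Finset.mem_singleton_self _⟩) := measurable_pi_apply _
    exact base.comp hφ hψ
  -- a.e. nonnegativity of S
  have hSae : ∀ᵐ ω ∂P, 0 ≤ S ω := by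
    filter_upwards [ae_all_iff.2 (fun j : Fin N =>
      G_nonneg_ae G hGmeas hGdist hIio (some j, k))] with ω hω
    exact Finset.sum_nonneg (fun j _ => hω j)
  -- rewrite the event
  have hev : {ω | τ * (1 + ρ * S ω) < ρ * X ω}
      = (fun ω => (S ω, X ω)) ⁻¹' {p : ℝ × ℝ | τ/ρ + τ * p.1 < p.2} := by
    ext ω
    simp only [mem_setOf_eq, mem_preimage]
    rw [div_add' _ _ _ hρ.ne', div_lt_iff₀ hρ]
    constructor <;> intro h <;> nlinarith
  have hU : MeasurableSet {p : ℝ × ℝ | τ/ρ + τ * p.1 < p.2} :=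
    measurableSet_lt (by fun_prop) measurable_snd
  haveI h1 : IsProbabilityMeasure (Measure.map X P) :=
    Measure.isProbabilityMeasure_map hXm.aemeasurable
  haveI h2 : IsProbabilityMeasure (Measure.map S P) :=
    Measure.isProbabilityMeasure_map hSm.aemeasurable
  have hpair : Measure.map (fun ω => (S ω, X ω)) P
      = (Measure.map S P).prod (Measure.map X P) :=
    (indepFun_iff_map_prod_eq_prod_map_map hSm.aemeasurable hXm.aemeasurable).1 hindep
  rw [hev, ← Measure.map_apply (hSm.prodMk hXm) hU, hpair, Measure.prod_apply hU]
  have hmk : ∀ s : ℝ, (Prod.mk s ⁻¹' {p : ℝ × ℝ | τ/ρ + τ * p.1 < p.2}) = Ioi (τ/ρ + τ * s) := by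
    intro s; rfl
  have hcongr : ∀ᵐ s ∂(Measure.map S P),
      (Measure.map X P) (Prod.mk s ⁻¹' {p : ℝ × ℝ | τ/ρ + τ * p.1 < p.2})
        = ENNReal.ofReal (exp (-(τ/ρ))) * ENNReal.ofReal (exp (-(τ * s))) := by
    have hSae' : ∀ᵐ s ∂(Measure.map S P), 0 ≤ s :=
      (ae_map_iff hSm.aemeasurable measurableSet_Ici).2 hSae
    filter_upwards [hSae'] with s hs
    rw [hmk s, hX, hGdist, hIoi _ (by positivity), ← ENNReal.ofReal_mul (exp_pos _).le,
      ← Real.exp_add]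
    ring_nf
  rw [lintegral_congr_ae hcongr, lintegral_const_mul _ (by fun_prop)]
  have hlap : ∫⁻ s, ENNReal.ofReal (exp (-(τ * s))) ∂(Measure.map S P)
      = ENNReal.ofReal ((1 + τ)⁻¹) ^ N := by
    rw [lintegral_map (by fun_prop) hSm]
    have := hLP k τ hτ Finset.univ
    simpa using this
  rw [hlap, ← ENNReal.ofReal_pow (by positivity), ← ENNReal.ofReal_mul (exp_pos _).le, inv_pow]

lemma block_prod (N : ℕ) (G : Option (Fin N) × ℕ → Ω → ℝ) (hGmeas : ∀ i, Measurable (G i))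
    (hGindep : iIndepFun G P)
    (s : Finset ℕ) (B : ℕ → Set (Option (Fin N) → ℝ)) (hB : ∀ k ∈ s, MeasurableSet (B k)) :
    P (⋂ k ∈ s, (fun ω (i : Option (Fin N)) => G (i, k) ω) ⁻¹' (B k))
      = ∏ k ∈ s, P ((fun ω (i : Option (Fin N)) => G (i, k) ω) ⁻¹' (B k)) := by
  classical
  induction s using Finset.induction_on with
  | empty => simp
  | @insert a s ha IH =>
    have hBs : ∀ k ∈ s, MeasurableSet (B k) := fun k hk => hB k (Finset.mem_insert_of_mem hk)
    have hBa : MeasurableSet (B a) := hB a (Finset.mem_insert_self a s)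
    set T : ℕ → Finset (Option (Fin N) × ℕ) :=
      fun k => (Finset.univ : Finset (Option (Fin N))).image (fun i => (i, k)) with hT
    set U : Finset (Option (Fin N) × ℕ) := s.biUnion T with hU
    have hmemU : ∀ (i : Option (Fin N)) (k : ℕ), k ∈ s → (i, k) ∈ U := by
      intro i k hk
      rw [hU, Finset.mem_biUnion]
      exact ⟨k, hk, Finset.mem_image_of_mem _ (Finset.mem_univ i)⟩
    have hdisj : Disjoint (T a) U := by
      simp only [Finset.disjoint_left, hT, hU, Finset.mem_biUnion, Finset.mem_image]
      rintro x ⟨i, _, rfl⟩ ⟨k, hk, i', _, hi'⟩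
      simp only [Prod.mk.injEq] at hi'
      exact ha (hi'.2 ▸ hk)
    -- independence between block a and blocks in s
    have base := hGindep.indepFun_finset (T a) U hdisj hGmeas
    have hφ : Measurable (fun x : (↥(T a) → ℝ) =>
        fun i : Option (Fin N) => x ⟨(i, a), Finset.mem_image_of_mem _ (Finset.mem_univ i)⟩) :=
      measurable_pi_lambda _ (fun i => measurable_pi_apply _)
    have hindep : IndepFun (fun ω (i : Option (Fin N)) => G (i, a) ω)
        (fun ω (i : ↥U) => G i ω) P :=
      base.comp hφ measurable_id
    -- the intersection over s as a preimage of the U-tuple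
    set C : Set (↥U → ℝ) :=
      ⋂ k, ⋂ (hk : k ∈ s),
        (fun (x : ↥U → ℝ) (i : Option (Fin N)) =>
          x ⟨(i, k), hmemU i k hk⟩) ⁻¹' (B k) with hC
    have hCm : MeasurableSet C := by
      rw [hC]
      refine MeasurableSet.iInter (fun k => MeasurableSet.iInter (fun hk => ?_))
      exact (measurable_pi_lambda _ (fun i => measurable_pi_apply _)) (hBs k hk)
    have hCpre : (fun ω (i : ↥U) => G i ω) ⁻¹' C
        = ⋂ k ∈ s, (fun ω (i : Option (Fin N)) => G (i, k) ω) ⁻¹' (B k) := by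
      ext ω
      simp only [hC, mem_preimage, mem_iInter]
    rw [Finset.set_biInter_insert, Finset.prod_insert ha, ← IH hBs, ← hCpre]
    exact hindep.measure_inter_preimage_eq_mul (B a) C hBa hCm

lemma prob_formula (N : ℕ) (ρ : ℝ) (hρ : 0 < ρ)
    (G : Option (Fin N) × ℕ → Ω → ℝ) (hGmeas : ∀ i, Measurable (G i))
    (hGindep : iIndepFun G P)
    (hGdist : ∀ i, Measure.map (G i) P = expMeasure 1)
    (hGae : ∀ i, ∀ᵐ ω ∂P, 0 ≤ G i ω)
    (htail : ∀ (k : ℕ) (τ : ℝ), 0 ≤ τ →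
      P {ω | τ * (1 + ρ * ∑ j : Fin N, G (some j, k) ω) < ρ * G (none, k) ω}
        = ENNReal.ofReal (exp (-(τ/ρ)) * ((1 + τ)^N)⁻¹))
    (hblock : ∀ (s : Finset ℕ) (B : ℕ → Set (Option (Fin N) → ℝ)),
      (∀ k ∈ s, MeasurableSet (B k)) →
      P (⋂ k ∈ s, (fun ω (i : Option (Fin N)) => G (i, k) ω) ⁻¹' (B k))
        = ∏ k ∈ s, P ((fun ω (i : Option (Fin N)) => G (i, k) ω) ⁻¹' (B k)))
    (α β : ℕ → Ω → ℝ)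
    (hα : ∀ k ω, α k ω = ρ * G (none, k) ω)
    (hβ : ∀ k ω, β k ω = ρ * ∑ j : Fin N, G (some j, k) ω)
    (Γ : ℕ → Ω → ℝ) (hΓ : ∀ n ω, Γ n ω = maxIcc n (fun k => α k ω / (1 + β k ω)))
    {n : ℕ} (hn : 1 ≤ n) {τ : ℝ} (hτ : 0 ≤ τ) :
    P {ω | Γ n ω ≤ τ} = (1 - ENNReal.ofReal (exp (-(τ/ρ)) * ((1 + τ)^N)⁻¹)) ^ n := by
  classical
  set D : Set (Option (Fin N) → ℝ) :=
    {x | ρ * x none / (1 + ρ * ∑ j : Fin N, x (some j)) ≤ τ} with hD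
  have hDm : MeasurableSet D := by
    apply measurableSet_le _ measurable_const
    fun_prop
  have hset : {ω | Γ n ω ≤ τ}
      = ⋂ k ∈ Finset.Icc 1 n, (fun ω (i : Option (Fin N)) => G (i, k) ω) ⁻¹' D := by
    ext ω
    haveI : Nonempty ((Finset.Icc 1 n : Finset ℕ) : Type) :=
      ⟨⟨1, by simp only [Finset.mem_Icc]; omega⟩⟩
    simp only [mem_setOf_eq, mem_iInter, mem_preimage]
    rw [hΓ, maxIcc, ciSup_le_iff ((Set.finite_range _).bddAbove)]
    constructor
    · intro h k hk
      have h2 := h ⟨k, hk⟩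
      rw [hα, hβ] at h2
      exact h2
    · intro h k
      have h2 := h k.1 k.2
      rw [hα, hβ]
      exact h2
  have hk1 : ∀ k : ℕ, P ((fun ω (i : Option (Fin N)) => G (i, k) ω) ⁻¹' D)
      = 1 - ENNReal.ofReal (exp (-(τ/ρ)) * ((1 + τ)^N)⁻¹) := by
    intro k
    have hmeas : MeasurableSet
        {ω | τ * (1 + ρ * ∑ j : Fin N, G (some j, k) ω) < ρ * G (none, k) ω} := by
      apply measurableSet_lt
      · apply Measurable.const_mul
        apply Measurable.const_add
        exact (Finset.measurable_sum _ (fun j _ => hGmeas (some j, k))).const_mul ρ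
      · exact (hGmeas _).const_mul ρ
    have hsetae : ((fun ω (i : Option (Fin N)) => G (i, k) ω) ⁻¹' D : Set Ω)
        =ᵐ[P] ({ω | τ * (1 + ρ * ∑ j : Fin N, G (some j, k) ω) < ρ * G (none, k) ω}ᶜ : Set Ω) := by
      rw [Filter.eventuallyEq_set]
      filter_upwards [ae_all_iff.2 (fun j : Fin N => hGae (some j, k))] with ω hω
      have hS : 0 ≤ ∑ j : Fin N, G (some j, k) ω := Finset.sum_nonneg fun j _ => hω j
      have hpos : 0 < 1 + ρ * ∑ j : Fin N, G (some j, k) ω := by nlinarith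
      simp only [mem_preimage, hD, mem_setOf_eq, mem_compl_iff]
      constructor
      · intro h2
        rw [div_le_iff₀ hpos] at h2
        intro hlt
        exact absurd hlt (not_lt.2 (by linarith))
      · intro h2
        have h3 := not_lt.1 h2
        rw [div_le_iff₀ hpos]
        linarith
    rw [measure_congr hsetae, prob_compl_eq_one_sub hmeas, htail k τ hτ]
  rw [hset, hblock _ _ (fun k _ => hDm)]
  rw [Finset.prod_congr rfl (fun k _ => hk1 k), Finset.prod_const, Nat.card_Icc]
  norm_num

noncomputable def tauF (N : ℕ) (ρ : ℝ) (n : ℕ) : ℝ :=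
  ρ * Real.log n - ρ * ((N : ℝ) + 1) * Real.log (Real.log n)

noncomputable def rF (N : ℕ) (ρ : ℝ) (n : ℕ) : ℝ :=
  Real.exp (-(tauF N ρ n / ρ)) * ((1 + tauF N ρ n) ^ N)⁻¹

lemma tendsto_log_nat : Tendsto (fun n : ℕ => Real.log n) atTop atTop :=
  Real.tendsto_log_atTop.comp tendsto_natCast_atTop_atTop

lemma tendsto_loglog_div_log :
    Tendsto (fun n : ℕ => Real.log (Real.log n) / Real.log n) atTop (nhds 0) := by
  have h1 : Tendsto (fun x : ℝ => Real.log x / x) atTop (nhds 0) :=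
    Real.isLittleO_log_id_atTop.tendsto_div_nhds_zero
  have := h1.comp tendsto_log_nat
  simpa [Function.comp_def] using this

lemma tauF_tendsto (N : ℕ) (ρ : ℝ) (hρ : 0 < ρ) :
    Tendsto (tauF N ρ) atTop atTop := by
  have hg : Tendsto (fun n : ℕ =>
      ρ * (1 - ((N : ℝ) + 1) * (Real.log (Real.log n) / Real.log n))) atTop (nhds ρ) := by
    have := ((tendsto_const_nhds (x := (1:ℝ))).sub
      ((tendsto_const_nhds (x := ((N:ℝ)+1))).mul tendsto_loglog_div_log)).const_mul ρ
    simpa using this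
  have key : Tendsto (fun n : ℕ => Real.log n *
      (ρ * (1 - ((N : ℝ) + 1) * (Real.log (Real.log n) / Real.log n)))) atTop atTop :=
    Filter.Tendsto.atTop_mul_pos hρ tendsto_log_nat hg
  apply key.congr'
  filter_upwards [eventually_ge_atTop 2] with n hn
  have hlog : Real.log n ≠ 0 := by
    have : (1:ℝ) < n := by exact_mod_cast Nat.lt_of_lt_of_le Nat.one_lt_two hn
    exact (Real.log_pos this).ne'
  rw [tauF]
  field_simp

lemma rF_pos (N : ℕ) (ρ : ℝ) {n : ℕ} (h : 0 ≤ tauF N ρ n) : 0 < rF N ρ n := by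
  have : (0:ℝ) < 1 + tauF N ρ n := by linarith
  rw [rF]; positivity

lemma rF_le_one (N : ℕ) (ρ : ℝ) (hρ : 0 < ρ) {n : ℕ} (h : 0 ≤ tauF N ρ n) : rF N ρ n ≤ 1 := by
  rw [rF]
  have h1 : Real.exp (-(tauF N ρ n / ρ)) ≤ 1 := by
    rw [Real.exp_le_one_iff]
    have : 0 ≤ tauF N ρ n / ρ := div_nonneg h hρ.le
    linarith
  have h2 : ((1 + tauF N ρ n) ^ N)⁻¹ ≤ 1 := by
    rw [inv_le_one_iff₀]
    right
    exact one_le_pow₀ (by linarith)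
  have h3 : (0:ℝ) ≤ ((1 + tauF N ρ n) ^ N)⁻¹ := by positivity
  calc Real.exp (-(tauF N ρ n / ρ)) * ((1 + tauF N ρ n) ^ N)⁻¹ ≤ 1 * 1 :=
        mul_le_mul h1 h2 h3 zero_le_one
    _ = 1 := by norm_num

lemma rF_tendsto_zero (N : ℕ) (ρ : ℝ) (hρ : 0 < ρ) :
    Tendsto (rF N ρ) atTop (nhds 0) := by
  have hexp : Tendsto (fun n : ℕ => Real.exp (-(tauF N ρ n / ρ))) atTop (nhds 0) := by
    apply Real.tendsto_exp_atBot.comp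
    exact tendsto_neg_atBot_iff.2 (((tauF_tendsto N ρ hρ).atTop_div_const hρ))
  apply squeeze_zero' ?_ ?_ hexp
  · filter_upwards [(tauF_tendsto N ρ hρ).eventually_ge_atTop 0] with n hn
    exact (rF_pos N ρ hn).le
  · filter_upwards [(tauF_tendsto N ρ hρ).eventually_ge_atTop 0] with n hn
    rw [rF]
    have h2 : ((1 + tauF N ρ n) ^ N)⁻¹ ≤ 1 := by
      rw [inv_le_one_iff₀]; right; exact one_le_pow₀ (by linarith)
    nlinarith [Real.exp_pos (-(tauF N ρ n / ρ))]

lemma log_ratio_tendsto (N : ℕ) (ρ : ℝ) (hρ : 0 < ρ) :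
    Tendsto (fun n : ℕ => Real.log (1 - rF N ρ n) / (-(rF N ρ n))) atTop (nhds 1) := by
  have hderiv : HasDerivAt Real.log 1 1 := by
    simpa using Real.hasDerivAt_log one_ne_zero
  have hslope := hasDerivAt_iff_tendsto_slope.1 hderiv
  have hz : Tendsto (fun n : ℕ => 1 - rF N ρ n) (atTop) (nhdsWithin 1 {(1:ℝ)}ᶜ) := by
    rw [tendsto_nhdsWithin_iff]
    constructor
    · simpa using (tendsto_const_nhds (x := (1:ℝ))).sub (rF_tendsto_zero N ρ hρ)
    · filter_upwards [(tauF_tendsto N ρ hρ).eventually_ge_atTop 0] with n hn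
      have := rF_pos N ρ hn
      simp only [mem_compl_iff, mem_singleton_iff]
      intro h
      nlinarith
  have hcomp := hslope.comp hz
  apply hcomp.congr'
  filter_upwards [(tauF_tendsto N ρ hρ).eventually_ge_atTop 0] with n hn
  have hr := rF_pos N ρ hn
  simp only [Function.comp_apply, slope_def_field, Real.log_one]
  rw [div_eq_div_iff (by nlinarith) (by nlinarith)]
  ring

lemma ratio_prod_tendsto (N : ℕ) (ρ : ℝ) (hρ : 0 < ρ) :
    Tendsto (fun n : ℕ => (n : ℝ) * rF N ρ n / Real.log n) atTop (nhds ((ρ ^ N)⁻¹)) := by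
  have hbase : Tendsto (fun n : ℕ => (1 + tauF N ρ n) / Real.log n) atTop (nhds ρ) := by
    have h1 : Tendsto (fun n : ℕ => (Real.log n)⁻¹ + ρ
        - ρ * ((N:ℝ)+1) * (Real.log (Real.log n) / Real.log n)) atTop (nhds ρ) := by
      have := ((tendsto_log_nat.inv_tendsto_atTop).add (tendsto_const_nhds (x := ρ))).sub
        ((tendsto_const_nhds (x := ρ * ((N:ℝ)+1))).mul tendsto_loglog_div_log)
      simpa using this
    apply h1.congr'
    filter_upwards [eventually_ge_atTop 2] with n hn
    have hlog : Real.log n ≠ 0 := by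
      have : (1:ℝ) < n := by exact_mod_cast Nat.lt_of_lt_of_le Nat.one_lt_two hn
      exact (Real.log_pos this).ne'
    rw [tauF]
    field_simp
    ring
  have hinv : Tendsto (fun n : ℕ => Real.log n / (1 + tauF N ρ n)) atTop (nhds ρ⁻¹) := by
    have := hbase.inv₀ hρ.ne'
    apply this.congr
    intro n
    rw [inv_div]
  have hpow : Tendsto (fun n : ℕ => (Real.log n / (1 + tauF N ρ n)) ^ N) atTop
      (nhds ((ρ ^ N)⁻¹)) := by
    rw [← inv_pow]
    exact hinv.pow N
  apply hpow.congr'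
  filter_upwards [(tauF_tendsto N ρ hρ).eventually_ge_atTop 1, eventually_ge_atTop 2]
    with n hτ hn
  have hn1 : (1:ℝ) < n := by exact_mod_cast Nat.lt_of_lt_of_le Nat.one_lt_two hn
  have hlogpos : 0 < Real.log n := Real.log_pos hn1
  have hnpos : (0:ℝ) < n := by linarith
  have h1τ : (0:ℝ) < 1 + tauF N ρ n := by linarith
  have hexp : Real.exp (-(tauF N ρ n / ρ)) = (Real.log n) ^ (N + 1) / n := by
    have hτρ : tauF N ρ n / ρ = Real.log n - ((N:ℝ)+1) * Real.log (Real.log n) := by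
      rw [tauF]; field_simp
    rw [hτρ, neg_sub, Real.exp_sub]
    congr 1
    · have hc : ((N:ℝ)+1) = ((N+1 : ℕ) : ℝ) := by push_cast; ring
      rw [hc, Real.exp_nat_mul, Real.exp_log hlogpos]
    · exact Real.exp_log hnpos
  rw [div_pow, rF, hexp]
  field_simp
  ring

lemma analysis_main (N : ℕ) (ρ : ℝ) (hρ : 0 < ρ) :
    Tendsto (fun n : ℕ => (n : ℝ) * Real.log (1 - rF N ρ n) / Real.log n) atTop
      (nhds (-(ρ ^ N)⁻¹)) := by
  have hmul := (log_ratio_tendsto N ρ hρ).mul (ratio_prod_tendsto N ρ hρ).neg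
  rw [one_mul] at hmul
  apply hmul.congr'
  filter_upwards [(tauF_tendsto N ρ hρ).eventually_ge_atTop 1, eventually_ge_atTop 2]
    with n hτ hn
  have hn1 : (1:ℝ) < n := by exact_mod_cast Nat.lt_of_lt_of_le Nat.one_lt_two hn
  have hlogpos : 0 < Real.log n := Real.log_pos hn1
  have hr := rF_pos N ρ (by linarith : (0:ℝ) ≤ tauF N ρ n)
  field_simp

end MaxSINRAux

/-- In the symmetric model, the max-SINR value `Γ n = max_{1≤k≤n} α k / (1 + β k)`
satisfies `log P(Γ n ≤ ρ log n - ρ (N+1) log (log n)) / log n → -ρ^(-N)` as `n → ∞`. -/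
theorem maxSINR_lower_tail
    {Ω : Type*} [MeasurableSpace Ω] (P : Measure Ω) [IsProbabilityMeasure P]
    (N : ℕ) (hN : 1 ≤ N) (ρ : ℝ) (hρ : 0 < ρ)
    (G : Option (Fin N) × ℕ → Ω → ℝ) (hGmeas : ∀ i, Measurable (G i))
    (hGindep : iIndepFun G P)
    (hGdist : ∀ i, Measure.map (G i) P = expMeasure 1)
    (α β : ℕ → Ω → ℝ)
    (hα : ∀ k ω, α k ω = ρ * G (none, k) ω)
    (hβ : ∀ k ω, β k ω = ρ * ∑ j : Fin N, G (some j, k) ω)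
    (Γ : ℕ → Ω → ℝ) (hΓ : ∀ n ω, Γ n ω = maxIcc n (fun k => α k ω / (1 + β k ω))) :
    Tendsto
      (fun n : ℕ =>
        Real.log
            (P {ω | Γ n ω ≤ ρ * Real.log n - ρ * ((N : ℝ) + 1) * Real.log (Real.log n)}).toReal
          / Real.log n)
      atTop (nhds (-(ρ ^ N)⁻¹)) := by
  classical
  have hGae : ∀ i, ∀ᵐ ω ∂P, 0 ≤ G i ω := fun i =>
    G_nonneg_ae G hGmeas hGdist expMeasure_one_Iio i
  have htail : ∀ (k : ℕ) (τ : ℝ), 0 ≤ τ →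
      P {ω | τ * (1 + ρ * ∑ j : Fin N, G (some j, k) ω) < ρ * G (none, k) ω}
        = ENNReal.ofReal (exp (-(τ/ρ)) * ((1 + τ)^N)⁻¹) := fun k τ hτ =>
    tail_prob N ρ hρ G hGmeas hGindep hGdist (fun c hc => expMeasure_one_Ioi hc)
      expMeasure_one_Iio (fun τ' hτ' => lintegral_exp_neg_expMeasure hτ')
      (fun k' τ' hτ' s => laplace_sum N G hGmeas hGindep hGdist k' hτ'
        (lintegral_exp_neg_expMeasure hτ') s) k hτ
  have hblock := block_prod N G hGmeas hGindep
  have hform : ∀ n : ℕ, 1 ≤ n → 0 ≤ tauF N ρ n →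
      P {ω | Γ n ω ≤ tauF N ρ n} = (1 - ENNReal.ofReal (rF N ρ n)) ^ n := by
    intro n hn hτ
    have h := prob_formula N ρ hρ G hGmeas hGindep hGdist hGae htail hblock α β hα hβ Γ hΓ
      hn hτ
    rw [h]
    rfl
  have hmain := analysis_main N ρ hρ
  apply hmain.congr'
  filter_upwards [(tauF_tendsto N ρ hρ).eventually_ge_atTop 1, eventually_ge_atTop 2]
    with n hτ hn
  have h0τ : (0:ℝ) ≤ tauF N ρ n := by linarith
  have hset : {ω | Γ n ω ≤ ρ * Real.log n - ρ * ((N : ℝ) + 1) * Real.log (Real.log n)}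
      = {ω | Γ n ω ≤ tauF N ρ n} := rfl
  rw [hset, hform n (by omega) h0τ]
  have hr0 : 0 ≤ rF N ρ n := (rF_pos N ρ h0τ).le
  have hr1 : rF N ρ n ≤ 1 := rF_le_one N ρ hρ h0τ
  have hofr : (1 : ENNReal) - ENNReal.ofReal (rF N ρ n) = ENNReal.ofReal (1 - rF N ρ n) := by
    rw [ENNReal.ofReal_sub _ hr0, ENNReal.ofReal_one]
  rw [hofr, ← ENNReal.ofReal_pow (by linarith), ENNReal.toReal_ofReal (pow_nonneg (by linarith) n),
    Real.log_pow]
end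

section
/- (Lemma 1, upper bound) In the symmetric model, the no-interference average rate satisfies R_up(n) ≤ log₂(ρ·log n) + log₂(log n)/log n + o(log(log n)/log n); that is, there is a function h with h(n)·log n/log(log n) → 0 such that for all sufficiently large n, E[log₂(1+α^up_n)] ≤ log₂(ρ·log n) + log₂(log n)/log n + h(n). -/
open MeasureTheory ProbabilityTheory Filter Real

section AuxExpLemmas
open Set

lemma myHasDeriv (t x : ℝ) : HasDerivAt (fun x => -(x - t + 1) * Real.exp (-x)) ((x - t) * Real.exp (-x)) x := by
  have h1 : HasDerivAt (fun x : ℝ => -(x - t + 1)) (-1) x := by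
    exact (((hasDerivAt_id x).sub_const t).add_const 1).neg
  have h2 : HasDerivAt (fun x : ℝ => Real.exp (-x)) (-Real.exp (-x)) x := by
    simpa using ((hasDerivAt_id x).neg).exp
  have : HasDerivAt (fun x => -(x - t + 1) * Real.exp (-x))
      (-1 * Real.exp (-x) + -(x - t + 1) * -Real.exp (-x)) x := h1.mul h2
  convert this using 1
  ring

lemma myTendsto (t : ℝ) : Filter.Tendsto (fun x => -(x - t + 1) * Real.exp (-x)) atTop (nhds 0) := by
  have h1 : Filter.Tendsto (fun x : ℝ => x * Real.exp (-x)) atTop (nhds 0) := by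
    simpa using Real.tendsto_pow_mul_exp_neg_atTop_nhds_zero 1
  have h2 : Filter.Tendsto (fun x : ℝ => Real.exp (-x)) atTop (nhds 0) :=
    Real.tendsto_exp_neg_atTop_nhds_zero
  have := (h1.neg.add ((h2.const_mul (t - 1))))
  simp only [neg_zero, mul_zero, add_zero, zero_add] at this
  refine this.congr fun x => ?_
  ring

lemma myIntOn (t : ℝ) : IntegrableOn (fun x => (x - t) * Real.exp (-x)) (Ioi t) := by
  refine integrableOn_Ioi_deriv_of_nonneg ?_ (fun x _ => myHasDeriv t x)
    (fun x hx => mul_nonneg (by linarith [mem_Ioi.mp hx]) (Real.exp_nonneg _)) (myTendsto t)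
  exact (Continuous.continuousWithinAt (by continuity))

lemma myIntegral (t : ℝ) : ∫ x in Ioi t, (x - t) * Real.exp (-x) = Real.exp (-t) := by
  rw [integral_Ioi_of_hasDerivAt_of_tendsto (Continuous.continuousWithinAt (by continuity))
    (fun x _ => myHasDeriv t x) (myIntOn t) (myTendsto t)]
  simp

lemma pdf_smul_eq (t : ℝ) (ht : 0 ≤ t) (x : ℝ) :
    ((exponentialPDFReal 1 x).toNNReal) • max (x - t) 0
      = Set.indicator (Ioi t) (fun x => (x - t) * Real.exp (-x)) x := by
  rw [NNReal.smul_def]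
  have hpdf : exponentialPDFReal 1 x = if 0 ≤ x then Real.exp (-x) else 0 := by
    simp [exponentialPDFReal, gammaPDFReal, Real.Gamma_one]
  rcases lt_or_ge t x with hx | hx
  · have hx0 : 0 ≤ x := le_trans ht hx.le
    rw [Set.indicator_of_mem (Set.mem_Ioi.mpr hx)]
    rw [hpdf, if_pos hx0, smul_eq_mul, Real.coe_toNNReal _ (Real.exp_nonneg _),
      max_eq_left (by linarith)]
    ring
  · rw [Set.indicator_of_notMem (fun h => absurd (Set.mem_Ioi.mp h) (not_lt.mpr hx))]
    rw [smul_eq_mul, max_eq_right (by linarith), mul_zero]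

lemma integral_max_expMeasure (t : ℝ) (ht : 0 ≤ t) :
    ∫ x, max (x - t) 0 ∂(expMeasure 1) = Real.exp (-t) := by
  have hmeas : Measurable fun x => (exponentialPDFReal 1 x).toNNReal :=
    (measurable_exponentialPDFReal 1).real_toNNReal
  rw [show expMeasure 1 = volume.withDensity fun x => ((exponentialPDFReal 1 x).toNNReal : ENNReal)
    from rfl]
  rw [integral_withDensity_eq_integral_smul hmeas]
  simp_rw [pdf_smul_eq t ht]
  rw [integral_indicator measurableSet_Ioi, myIntegral t]

lemma integrable_max_expMeasure (t : ℝ) (ht : 0 ≤ t) :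
    Integrable (fun x => max (x - t) 0) (expMeasure 1) := by
  have hmeas : Measurable fun x => (exponentialPDFReal 1 x).toNNReal :=
    (measurable_exponentialPDFReal 1).real_toNNReal
  rw [show expMeasure 1 = volume.withDensity fun x => ((exponentialPDFReal 1 x).toNNReal : ENNReal)
    from rfl]
  rw [integrable_withDensity_iff_integrable_smul hmeas]
  have : (fun x => ((exponentialPDFReal 1 x).toNNReal) • max (x - t) 0)
      = Set.indicator (Ioi t) (fun x => (x - t) * Real.exp (-x)) := funext (pdf_smul_eq t ht)
  rw [this, integrable_indicator_iff measurableSet_Ioi]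
  exact myIntOn t

lemma le_maxIcc {n k : ℕ} {f : ℕ → ℝ} (hk : k ∈ Finset.Icc 1 n) : f k ≤ maxIcc n f :=
  le_ciSup (f := fun k : (Finset.Icc 1 n : Finset ℕ) => f k)
    (Set.Finite.bddAbove (Set.finite_range _)) ⟨k, hk⟩

lemma maxIcc_le {n : ℕ} {f : ℕ → ℝ} {t : ℝ} (hn : 1 ≤ n)
    (h : ∀ k ∈ Finset.Icc 1 n, f k ≤ t) : maxIcc n f ≤ t := by
  have : Nonempty (Finset.Icc 1 n : Finset ℕ) :=
    ⟨⟨1, Finset.mem_Icc.mpr ⟨le_refl 1, hn⟩⟩⟩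
  exact ciSup_le fun k => h k k.2

end AuxExpLemmas

/-- Lemma 1, upper bound: in the symmetric model, the no-interference average rate
satisfies `E[log₂(1+α^up n)] ≤ log₂(ρ log n) + log₂(log n)/log n + o(log(log n)/log n)`. -/
theorem no_interference_rate_upper_bound
    {Ω : Type*} [MeasurableSpace Ω] (P : Measure Ω) [IsProbabilityMeasure P]
    (N : ℕ) (hN : 1 ≤ N) (ρ : ℝ) (hρ : 0 < ρ)
    (G : Option (Fin N) × ℕ → Ω → ℝ) (hGmeas : ∀ i, Measurable (G i))
    (hGindep : iIndepFun G P)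
    (hGdist : ∀ i, Measure.map (G i) P = expMeasure 1)
    (α β : ℕ → Ω → ℝ)
    (hα : ∀ k ω, α k ω = ρ * G (none, k) ω)
    (hβ : ∀ k ω, β k ω = ρ * ∑ j : Fin N, G (some j, k) ω)
    (αup : ℕ → Ω → ℝ) (hαup : ∀ n ω, αup n ω = maxIcc n (fun k => α k ω)) :
    ∃ h : ℕ → ℝ,
      Tendsto (fun n : ℕ => h n * Real.log n / Real.log (Real.log n)) atTop (nhds 0) ∧
      ∀ᶠ n : ℕ in atTop,
        (∫ ω, Real.logb 2 (1 + αup n ω) ∂P)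
          ≤ Real.logb 2 (ρ * Real.log n) + Real.logb 2 (Real.log n) / Real.log n + h n := by
  classical
  set K : ℝ := (1/ρ + 1) / Real.log 2 with hK
  refine ⟨fun n => K / Real.log n, ?_, ?_⟩
  · -- tendsto part
    have hloglog : Tendsto (fun n : ℕ => Real.log (Real.log n)) atTop atTop :=
      Real.tendsto_log_atTop.comp (Real.tendsto_log_atTop.comp tendsto_natCast_atTop_atTop)
    have h0 : Tendsto (fun n : ℕ => K / Real.log (Real.log n)) atTop (nhds 0) :=
      Tendsto.div_atTop tendsto_const_nhds hloglog
    refine h0.congr' ?_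
    filter_upwards [eventually_ge_atTop 3] with n hn
    have hL : (0:ℝ) < Real.log n := Real.log_pos (by exact_mod_cast lt_of_lt_of_le (by norm_num : (1:ℕ) < 3) hn)
    field_simp
  · -- main inequality
    filter_upwards [eventually_ge_atTop 3] with n hn
    have hn1 : 1 ≤ n := le_trans (by norm_num) hn
    have hn3 : (3:ℝ) ≤ (n:ℝ) := by exact_mod_cast hn
    set L : ℝ := Real.log n with hLdef
    have hL1 : 1 < L := by
      rw [hLdef, ← Real.exp_lt_exp (x := 1), Real.exp_log (by linarith)]
      calc Real.exp 1 < 2.7182818286 := Real.exp_one_lt_d9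
        _ < 3 := by norm_num
        _ ≤ n := hn3
    have hL0 : 0 < L := by linarith
    have hρL : 0 < ρ * L := mul_pos hρ hL0
    set c : ℝ := 1 + ρ * L with hc
    have hc0 : 0 < c := by positivity
    set S : Ω → ℝ := fun ω => ∑ k ∈ Finset.Icc 1 n, max (G (none, k) ω - L) 0 with hS
    -- expectation of each truncated term
    have hEk : ∀ k : ℕ, ∫ ω, max (G (none, k) ω - L) 0 ∂P = (n:ℝ)⁻¹ := by
      intro k
      have hmap := hGdist (none, k)
      have hint : ∫ ω, max (G (none, k) ω - L) 0 ∂P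
          = ∫ x, max (x - L) 0 ∂(Measure.map (G (none, k)) P) := by
        rw [integral_map (hGmeas _).aemeasurable]
        exact (Continuous.aestronglyMeasurable (by continuity))
      rw [hint, hmap, integral_max_expMeasure L hL0.le, hLdef, Real.exp_neg,
        Real.exp_log (show (0:ℝ) < n by linarith)]
    have hIk : ∀ k : ℕ, Integrable (fun ω => max (G (none, k) ω - L) 0) P := by
      intro k
      have hmap := hGdist (none, k)
      have := integrable_max_expMeasure L hL0.le
      rw [← hmap] at this
      exact (integrable_map_measure (Continuous.aestronglyMeasurable (by continuity))
        (hGmeas _).aemeasurable).mp this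
    -- integrable dominating function
    have hSint : Integrable S P := integrable_finset_sum _ fun k _ => hIk k
    have hgint : Integrable (fun ω => Real.log c + (ρ / c) * S ω) P :=
      (integrable_const _).add (hSint.const_mul _)
    -- a.e. nonneg of G (none, 1)
    have hae : ∀ᵐ ω ∂P, 0 ≤ G (none, 1) ω := by
      have : P (G (none, 1) ⁻¹' Set.Iio 0) = 0 := by
        have hmapap : Measure.map (G (none, 1)) P (Set.Iio 0) = P (G (none, 1) ⁻¹' Set.Iio 0) :=
          Measure.map_apply (hGmeas _) measurableSet_Iio
        rw [← hmapap, hGdist (none, 1)]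
        have : expMeasure 1 (Set.Iio 0) = ∫⁻ x in Set.Iio 0, exponentialPDF 1 x :=
          withDensity_apply _ measurableSet_Iio
        rw [this, lintegral_exponentialPDF_of_nonpos le_rfl]
      filter_upwards [measure_eq_zero_iff_ae_notMem.mp this] with ω hω
      simpa using not_lt.mp (by simpa using hω)
    -- pointwise bound a.e.
    have hptwise : ∀ᵐ ω ∂P, Real.log (1 + αup n ω) ≤ Real.log c + (ρ / c) * S ω := by
      filter_upwards [hae] with ω hω
      have hup_le : αup n ω ≤ ρ * L + ρ * S ω := by
        rw [hαup]
        refine maxIcc_le hn1 fun k hk => ?_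
        have h1 : max (G (none, k) ω - L) 0 ≤ S ω :=
          Finset.single_le_sum (f := fun k => max (G (none, k) ω - L) 0)
            (fun i _ => le_max_right _ _) hk
        have h2 : G (none, k) ω - L ≤ max (G (none, k) ω - L) 0 := le_max_left _ _
        have := hα k ω
        rw [this]
        nlinarith [hρ.le]
      have hup_ge : 0 ≤ αup n ω := by
        rw [hαup]
        have h1 : α 1 ω ≤ maxIcc n (fun k => α k ω) :=
          le_maxIcc (f := fun k => α k ω) (Finset.mem_Icc.mpr ⟨le_refl 1, hn1⟩)
        have : 0 ≤ α 1 ω := by rw [hα]; exact mul_nonneg hρ.le hω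
        linarith
      have hpos : (0:ℝ) < 1 + αup n ω := by linarith
      have hdiv : Real.log ((1 + αup n ω) / c) ≤ (1 + αup n ω) / c - 1 :=
        Real.log_le_sub_one_of_pos (by positivity)
      have hlogdiv : Real.log ((1 + αup n ω) / c) = Real.log (1 + αup n ω) - Real.log c :=
        Real.log_div (by positivity) hc0.ne'
      have hSnn : 0 ≤ S ω := Finset.sum_nonneg fun i _ => le_max_right _ _
      have hfrac : (1 + αup n ω) / c - 1 ≤ (ρ / c) * S ω := by
        have h1 : (1 + αup n ω) / c - 1 = (1 + αup n ω - c) / c := by field_simp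
        have h2 : (ρ / c) * S ω = (ρ * S ω) / c := by ring
        rw [h1, h2]
        gcongr
        rw [hc]
        linarith
      linarith [hlogdiv ▸ hdiv]
    -- integrate
    have hnonneg : 0 ≤ᵐ[P] fun ω => Real.log (1 + αup n ω) := by
      filter_upwards [hae] with ω hω
      apply Real.log_nonneg
      have h1 : α 1 ω ≤ maxIcc n (fun k => α k ω) :=
        le_maxIcc (f := fun k => α k ω) (Finset.mem_Icc.mpr ⟨le_refl 1, hn1⟩)
      have : 0 ≤ α 1 ω := by rw [hα]; exact mul_nonneg hρ.le hω
      rw [hαup]; linarith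
    have hmono : ∫ ω, Real.log (1 + αup n ω) ∂P ≤ ∫ ω, (Real.log c + (ρ / c) * S ω) ∂P :=
      integral_mono_of_nonneg hnonneg hgint hptwise
    have hgval : ∫ ω, (Real.log c + (ρ / c) * S ω) ∂P = Real.log c + ρ / c := by
      rw [integral_add (integrable_const _) (hSint.const_mul _), integral_const]
      have hSval : ∫ ω, S ω ∂P = 1 := by
        rw [hS, integral_finset_sum _ fun k _ => hIk k]
        simp only [hEk]
        rw [Finset.sum_const, Nat.card_Icc]
        simp
        field_simp
      rw [integral_const_mul, hSval]
      simp
    -- arithmetic and logb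
    have hlogc : Real.log c ≤ Real.log (ρ * L) + 1 / (ρ * L) := by
      have h1 : Real.log (c / (ρ * L)) ≤ c / (ρ * L) - 1 :=
        Real.log_le_sub_one_of_pos (by positivity)
      have h2 : Real.log (c / (ρ * L)) = Real.log c - Real.log (ρ * L) :=
        Real.log_div hc0.ne' hρL.ne'
      have h3 : c / (ρ * L) - 1 = 1 / (ρ * L) := by
        rw [hc]
        field_simp
        ring
      linarith [h2 ▸ h1]
    have hrc : ρ / c ≤ 1 / L := by
      rw [div_le_div_iff₀ hc0 hL0]
      nlinarith
    have hsum : Real.log c + ρ / c ≤ Real.log (ρ * L) + (1/ρ + 1) / L := by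
      have : 1 / (ρ * L) = (1/ρ) / L := by field_simp
      rw [this] at hlogc
      have : (1/ρ) / L + 1 / L = (1/ρ + 1) / L := by ring
      linarith
    have hlog2 : (0:ℝ) < Real.log 2 := Real.log_pos (by norm_num)
    have hfinal : ∫ ω, Real.logb 2 (1 + αup n ω) ∂P ≤ Real.logb 2 (ρ * L) + K / L := by
      have heq : ∫ ω, Real.logb 2 (1 + αup n ω) ∂P
          = (∫ ω, Real.log (1 + αup n ω) ∂P) / Real.log 2 := by
        simp_rw [Real.logb]
        exact integral_div _ _
      have hKL : Real.logb 2 (ρ * L) + K / L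
          = (Real.log (ρ * L) + (1/ρ + 1) / L) / Real.log 2 := by
        rw [Real.logb, hK]
        field_simp
      rw [heq, hKL]
      have hnum : (∫ ω, Real.log (1 + αup n ω) ∂P) ≤ Real.log (ρ * L) + (1/ρ + 1) / L :=
        le_trans (le_trans hmono (le_of_eq hgval)) hsum
      gcongr
    have hnn : 0 ≤ Real.logb 2 L / L :=
      div_nonneg (Real.logb_nonneg (by norm_num) hL1.le) hL0.le
    calc ∫ ω, Real.logb 2 (1 + αup n ω) ∂P ≤ Real.logb 2 (ρ * L) + K / L := hfinal
      _ ≤ Real.logb 2 (ρ * L) + Real.logb 2 L / L + K / L := by linarith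
end

section
/- (Fréchet limit for the asymmetric signal power) In the asymmetric model, for every t > 0, P( max_{1≤k≤n} α_k ≤ c · Γ(1+2/ε)^{ε/2} · n^{ε/2} · t ) → exp(−t^{−2/ε}) as n → ∞, where Γ denotes the Gamma function (so that Γ(1+2/ε) = E[G_1^{2/ε}]). -/
open MeasureTheory ProbabilityTheory Filter Real

section AuxFrechet
open Set Topology


theorem tendsto_pow_exp_neg {L : ℝ} (hL : 0 < L) (a : ℕ → ℝ)
    (ha : Tendsto a atTop (nhds L)) :
    Tendsto (fun n : ℕ => (1 - a n / n) ^ n) atTop (nhds (Real.exp (-L))) := by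
  have hinv : Tendsto (fun n : ℕ => ((n : ℝ))⁻¹) atTop (nhds 0) :=
    tendsto_inv_atTop_zero.comp tendsto_natCast_atTop_atTop
  have h1 : Tendsto (fun n : ℕ => a n / n) atTop (nhds 0) := by
    have := ha.mul hinv
    rw [mul_zero] at this
    exact this.congr fun n => by rw [div_eq_mul_inv]
  have hev : ∀ᶠ n : ℕ in atTop, 0 < a n ∧ a n / n < 1 ∧ 1 ≤ n :=
    (ha.eventually (eventually_gt_nhds hL)).and
      ((h1.eventually (eventually_lt_nhds zero_lt_one)).and (eventually_ge_atTop 1))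
  -- slope of log(1+h) at 0
  have hd : HasDerivAt (fun h : ℝ => Real.log (1 + h)) 1 0 := by
    have h2 : HasDerivAt (fun h : ℝ => (1:ℝ) + h) 1 0 := (hasDerivAt_id (0:ℝ)).const_add 1
    have h3 : HasDerivAt Real.log ((1:ℝ)+0)⁻¹ (1 + 0) := Real.hasDerivAt_log (by norm_num)
    have := h3.comp 0 h2
    rw [show ((1:ℝ)+0)⁻¹ * 1 = 1 by norm_num] at this
    exact this
  have hslope : Tendsto (fun h : ℝ => Real.log (1 + h) / h) (𝓝[≠] 0) (nhds 1) := by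
    have := hasDerivAt_iff_tendsto_slope.mp hd
    refine this.congr fun h => ?_
    simp [slope_def_field, div_eq_mul_inv]
  have hcomp : Tendsto (fun n : ℕ => -(a n / n)) atTop (𝓝[≠] 0) := by
    refine tendsto_nhdsWithin_of_tendsto_nhds_of_eventually_within _ (by simpa using h1.neg) ?_
    filter_upwards [hev] with n ⟨h0, _, h1n⟩
    have : 0 < a n / n := div_pos h0 (by exact_mod_cast h1n)
    simp only [mem_compl_iff, mem_singleton_iff]
    intro h; rw [neg_eq_zero] at h; linarith
  have hs : Tendsto (fun n : ℕ => Real.log (1 + -(a n / n)) / -(a n / n)) atTop (nhds 1) :=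
    hslope.comp hcomp
  have hlog : Tendsto (fun n : ℕ => (n : ℝ) * Real.log (1 - a n / n)) atTop (nhds (-L)) := by
    have := (ha.neg).mul hs
    rw [mul_one] at this
    refine this.congr' ?_
    filter_upwards [hev] with n ⟨h0, _, h1n⟩
    have hn0 : (n : ℝ) ≠ 0 := by positivity
    have ha0 : a n ≠ 0 := ne_of_gt h0
    rw [← sub_eq_add_neg]
    field_simp
  have hexp := (Real.continuous_exp.tendsto _).comp hlog
  refine hexp.congr' ?_
  filter_upwards [hev] with n ⟨h0, hlt, h1n⟩
  have hpos : 0 < 1 - a n / n := by linarith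
  rw [Function.comp_apply, Real.exp_nat_mul, Real.exp_log hpos]


theorem expMeasure_Iic {z : ℝ} (hz : 0 ≤ z) :
    expMeasure 1 (Iic z) = ENNReal.ofReal (1 - Real.exp (-z)) := by
  haveI : IsProbabilityMeasure (expMeasure 1) := isProbabilityMeasure_expMeasure one_pos
  have h1 : (expMeasure 1 (Iic z)).toReal = 1 - Real.exp (-z) := by
    rw [← measureReal_def, ← cdf_eq_real]
    have := cdf_expMeasure_eq one_pos z
    rw [this, if_pos hz, one_mul]
  rw [← h1, ENNReal.ofReal_toReal (measure_ne_top _ _)]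

theorem measurable_rpow_const' (q : ℝ) : Measurable fun x : ℝ => x ^ q :=
  measurable_of_continuousOn_compl_singleton 0 fun x hx =>
    (Real.continuousAt_rpow_const x q (Or.inl hx)).continuousWithinAt

theorem cdf_alpha {Ω : Type*} [MeasurableSpace Ω] (P : Measure Ω) [IsProbabilityMeasure P]
    (ε c : ℝ) (hε : 2 < ε) (hc : 0 < c)
    (Uf Gf : Ω → ℝ) (hUm : Measurable Uf) (hGm : Measurable Gf)
    (hindep : IndepFun Uf Gf P)
    (hUd : Measure.map Uf P = volume.restrict (Set.Ioc (0 : ℝ) 1))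
    (hGd : Measure.map Gf P = expMeasure 1)
    (y : ℝ) (hy : 0 < y) :
    P {ω | c * Uf ω ^ (-(ε / 2)) * Gf ω ≤ y}
      = ENNReal.ofReal (1 - ∫ u in Set.Ioc (0:ℝ) 1, Real.exp (-(y / c * u ^ (ε / 2)))) := by
  haveI : IsProbabilityMeasure (expMeasure 1) := isProbabilityMeasure_expMeasure one_pos
  have hmap : Measure.map (fun ω => (Uf ω, Gf ω)) P
      = (volume.restrict (Set.Ioc (0:ℝ) 1)).prod (expMeasure 1) := by
    rw [← hUd, ← hGd]
    exact (indepFun_iff_map_prod_eq_prod_map_map hUm.aemeasurable hGm.aemeasurable).mp hindep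
  have hfm : Measurable fun p : ℝ × ℝ => c * p.1 ^ (-(ε / 2)) * p.2 :=
    ((((measurable_rpow_const' (-(ε/2))).comp measurable_fst)).const_mul c).mul measurable_snd
  have hSm : MeasurableSet {p : ℝ × ℝ | c * p.1 ^ (-(ε / 2)) * p.2 ≤ y} :=
    measurableSet_le hfm measurable_const
  have hset : {ω | c * Uf ω ^ (-(ε / 2)) * Gf ω ≤ y}
      = (fun ω => (Uf ω, Gf ω)) ⁻¹' {p : ℝ × ℝ | c * p.1 ^ (-(ε / 2)) * p.2 ≤ y} := rfl
  rw [hset, ← Measure.map_apply (hUm.prodMk hGm) hSm, hmap, Measure.prod_apply hSm]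
  have hfin : ∀ u ∈ Set.Ioc (0:ℝ) 1,
      expMeasure 1 (Prod.mk u ⁻¹' {p : ℝ × ℝ | c * p.1 ^ (-(ε / 2)) * p.2 ≤ y})
        = ENNReal.ofReal (1 - Real.exp (-(y / c * u ^ (ε / 2)))) := by
    intro u hu
    have hu0 : 0 < u := hu.1
    have hpre : Prod.mk u ⁻¹' {p : ℝ × ℝ | c * p.1 ^ (-(ε / 2)) * p.2 ≤ y}
        = Iic (y / c * u ^ (ε / 2)) := by
      ext g
      simp only [Set.mem_preimage, Set.mem_setOf_eq, Set.mem_Iic]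
      have hupos : (0:ℝ) < u ^ (-(ε / 2)) := Real.rpow_pos_of_pos hu0 _
      have hcu : (0:ℝ) < c * u ^ (-(ε / 2)) := by positivity
      rw [← le_div_iff₀' hcu]
      have : y / (c * u ^ (-(ε / 2))) = y / c * u ^ (ε / 2) := by
        rw [Real.rpow_neg hu0.le]
        field_simp
      rw [this]
    rw [hpre]
    exact expMeasure_Iic (by positivity)
  rw [setLIntegral_congr_fun measurableSet_Ioc hfin]
  -- now convert lintegral of ofReal to ofReal of integral
  have hcont : ∀ u ∈ Set.Ioc (0:ℝ) 1, Real.exp (-(y / c * u ^ (ε / 2))) ≤ 1 := by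
    intro u hu
    rw [Real.exp_le_one_iff]
    have : (0:ℝ) ≤ u ^ (ε/2) := Real.rpow_nonneg hu.1.le _
    have : (0:ℝ) ≤ y / c * u ^ (ε/2) := by positivity
    linarith
  have hmeas2 : Measurable fun u : ℝ => 1 - Real.exp (-(y / c * u ^ (ε / 2))) := by
    have : Measurable fun u : ℝ => Real.exp (-(y / c * u ^ (ε / 2))) :=
      (((measurable_rpow_const' (ε/2)).const_mul (y/c)).neg).exp
    exact measurable_const.sub this
  have hInt : IntegrableOn (fun u : ℝ => 1 - Real.exp (-(y / c * u ^ (ε / 2))))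
      (Set.Ioc (0:ℝ) 1) volume := by
    refine Measure.integrableOn_of_bounded (M := 1) (by simp) hmeas2.aestronglyMeasurable ?_
    filter_upwards [self_mem_ae_restrict measurableSet_Ioc] with u hu
    have h1 := hcont u hu
    have h2 : 0 < Real.exp (-(y / c * u ^ (ε / 2))) := Real.exp_pos _
    rw [Real.norm_eq_abs, abs_le]
    constructor <;> [linarith; linarith]
  have hnn : 0 ≤ᵐ[volume.restrict (Set.Ioc (0:ℝ) 1)]
      fun u : ℝ => 1 - Real.exp (-(y / c * u ^ (ε / 2))) := by
    filter_upwards [self_mem_ae_restrict measurableSet_Ioc] with u hu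
    have := hcont u hu
    simp only [Pi.zero_apply]
    linarith
  rw [← ofReal_integral_eq_lintegral_ofReal hInt hnn]
  congr 1
  rw [integral_sub (integrableOn_const (by simp) : IntegrableOn (fun _ : ℝ => (1:ℝ)) (Set.Ioc (0:ℝ) 1) volume) ?_]
  · simp only [integral_const, MeasurableSet.univ, Measure.restrict_apply, Set.univ_inter,
      Real.volume_Ioc, smul_eq_mul]
    norm_num
  · have : Measurable fun u : ℝ => Real.exp (-(y / c * u ^ (ε / 2))) :=
      (((measurable_rpow_const' (ε/2)).const_mul (y/c)).neg).exp
    refine Measure.integrableOn_of_bounded (M := 1) (by simp) this.aestronglyMeasurable ?_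
    filter_upwards [self_mem_ae_restrict measurableSet_Ioc] with u hu
    have h1 := hcont u hu
    have h2 : 0 < Real.exp (-(y / c * u ^ (ε / 2))) := Real.exp_pos _
    rw [Real.norm_eq_abs, abs_le]
    constructor <;> [linarith; linarith]



theorem meas_biInter_alpha {Ω : Type*} [mΩ : MeasurableSpace Ω] (P : Measure Ω)
    [IsProbabilityMeasure P]
    (ε c : ℝ) (X : Fin 2 × ℕ → Ω → ℝ) (hXmeas : ∀ i, Measurable (X i))
    (hXindep : iIndepFun X P) (y : ℝ) (s : Finset ℕ) :
    P (⋂ k ∈ s, {ω | c * X (0, k) ω ^ (-(ε / 2)) * X (1, k) ω ≤ y})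
      = ∏ k ∈ s, P {ω | c * X (0, k) ω ^ (-(ε / 2)) * X (1, k) ω ≤ y} := by
  classical
  set m : Fin 2 × ℕ → MeasurableSpace Ω :=
    fun i => MeasurableSpace.comap (X i) inferInstance with hm
  have h_le : ∀ i, m i ≤ mΩ := fun i => (hXmeas i).comap_le
  have hAmeas : ∀ (k : ℕ) (S : Set (Fin 2 × ℕ)), (0, k) ∈ S → (1, k) ∈ S →
      MeasurableSet[⨆ i ∈ S, m i] {ω | c * X (0, k) ω ^ (-(ε / 2)) * X (1, k) ω ≤ y} := by
    intro k S h0 h1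
    have hX0 : Measurable[⨆ i ∈ S, m i] (X (0, k)) := by
      have h : Measurable[m (0, k)] (X (0, k)) := fun t ht => ⟨t, ht, rfl⟩
      exact h.mono (le_biSup m h0) le_rfl
    have hX1 : Measurable[⨆ i ∈ S, m i] (X (1, k)) := by
      have h : Measurable[m (1, k)] (X (1, k)) := fun t ht => ⟨t, ht, rfl⟩
      exact h.mono (le_biSup m h1) le_rfl
    have hf : Measurable[⨆ i ∈ S, m i]
        fun ω => c * X (0, k) ω ^ (-(ε / 2)) * X (1, k) ω :=
      ((((measurable_rpow_const' (-(ε/2))).comp hX0)).const_mul c).mul hX1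
    exact measurableSet_le hf measurable_const
  induction s using Finset.induction_on with
  | empty => simp
  | insert j s hj ih =>
    rw [Finset.set_biInter_insert, Finset.prod_insert hj, ← ih]
    have hdisj : Disjoint ((Set.univ : Set (Fin 2)) ×ˢ ({j} : Set ℕ)) ((Set.univ : Set (Fin 2)) ×ˢ (↑s : Set ℕ)) := by
      rw [Set.disjoint_left]
      rintro ⟨i, k⟩ ⟨-, hk1⟩ ⟨-, hk2⟩
      simp only [Set.mem_singleton_iff] at hk1
      exact hj (hk1 ▸ hk2)
    have hind := indep_iSup_of_disjoint h_le hXindep.iIndep hdisj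
    have hA1 : MeasurableSet[⨆ i ∈ ((Set.univ : Set (Fin 2)) ×ˢ ({j} : Set ℕ)), m i]
        {ω | c * X (0, j) ω ^ (-(ε / 2)) * X (1, j) ω ≤ y} :=
      hAmeas j _ ⟨Set.mem_univ _, rfl⟩ ⟨Set.mem_univ _, rfl⟩
    have hA2 : MeasurableSet[⨆ i ∈ ((Set.univ : Set (Fin 2)) ×ˢ (↑s : Set ℕ)), m i]
        (⋂ k ∈ s, {ω | c * X (0, k) ω ^ (-(ε / 2)) * X (1, k) ω ≤ y}) := by
      refine MeasurableSet.biInter s.countable_toSet fun k hk =>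
        hAmeas k _ ⟨Set.mem_univ _, hk⟩ ⟨Set.mem_univ _, hk⟩
    exact (Indep_iff _ _ _).mp hind _ _ hA1 hA2


theorem tail_tendsto {ε b : ℝ} (hε : 2 < ε) (hb : 0 < b) :
    Tendsto (fun n : ℕ => ∫ w in (0:ℝ)..(n:ℝ), Real.exp (-(b * w ^ (ε/2)))) atTop
      (nhds (b ^ (-(2/ε)) * Real.Gamma (1 + 2/ε))) := by
  have hεpos : (0:ℝ) < ε := by linarith
  have hp : (1:ℝ) ≤ ε/2 := by linarith
  have hInt : IntegrableOn (fun w : ℝ => Real.exp (-(b * w ^ (ε/2)))) (Ioi (0:ℝ)) := by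
    have h := integrableOn_rpow_mul_exp_neg_mul_rpow (p := ε/2) (neg_one_lt_zero) (by linarith) hb
    refine h.congr_fun (fun x hx => ?_) measurableSet_Ioi
    simp only [rpow_zero, one_mul, neg_mul]
  have hval : ∫ w in Ioi (0:ℝ), Real.exp (-(b * w ^ (ε/2)))
      = b ^ (-(2/ε)) * Real.Gamma (1 + 2/ε) := by
    have h := integral_exp_neg_mul_rpow (by linarith : (0:ℝ) < ε/2) hb
    have heq : (fun x : ℝ => Real.exp (-(b * x ^ (ε/2))))
        = fun x : ℝ => Real.exp (-b * x ^ (ε/2)) := by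
      funext x; rw [neg_mul]
    rw [heq, h]
    have h2 : -1/(ε/2) = -(2/ε) := by
      rw [div_div_eq_mul_div]; ring
    have h3 : (1:ℝ)/(ε/2) + 1 = 1 + 2/ε := by
      rw [one_div_div]; ring
    rw [h2, h3]
  have := intervalIntegral_tendsto_integral_Ioi 0 hInt tendsto_natCast_atTop_atTop
  rwa [hval] at this
end AuxFrechet

/-- Fréchet limit for the asymmetric signal power: for every `t > 0`,
`P(max_{1≤k≤n} α k ≤ c · Γ(1+2/ε)^(ε/2) · n^(ε/2) · t) → exp (-t^(-2/ε))` as `n → ∞`. -/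
theorem asymmetric_signal_frechet_limit
    {Ω : Type*} [MeasurableSpace Ω] (P : Measure Ω) [IsProbabilityMeasure P]
    (ε c : ℝ) (hε : 2 < ε) (hc : 0 < c)
    (X : Fin 2 × ℕ → Ω → ℝ) (hXmeas : ∀ i, Measurable (X i))
    (hXindep : iIndepFun X P)
    (U G : ℕ → Ω → ℝ) (hUX : ∀ k, U k = X (0, k)) (hGX : ∀ k, G k = X (1, k))
    (hUdist : ∀ k, Measure.map (U k) P = volume.restrict (Set.Ioc (0 : ℝ) 1))
    (hUmem : ∀ k ω, U k ω ∈ Set.Ioc (0 : ℝ) 1)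
    (hGdist : ∀ k, Measure.map (G k) P = expMeasure 1)
    (α : ℕ → Ω → ℝ)
    (hα : ∀ k ω, α k ω = c * U k ω ^ (-(ε / 2)) * G k ω)
    (αup : ℕ → Ω → ℝ) (hαup : ∀ n ω, αup n ω = maxIcc n (fun k => α k ω))
    (t : ℝ) (ht : 0 < t) :
    Tendsto
      (fun n : ℕ =>
        (P {ω | αup n ω
            ≤ c * Real.Gamma (1 + 2 / ε) ^ (ε / 2) * (n : ℝ) ^ (ε / 2) * t}).toReal)
      atTop (nhds (Real.exp (-(t ^ (-(2 / ε)))))) := by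
  have hεpos : (0:ℝ) < ε := by linarith
  have hΓ : 0 < Real.Gamma (1 + 2 / ε) := Real.Gamma_pos_of_pos (by positivity)
  set Γe := Real.Gamma (1 + 2 / ε) with hΓe
  set b : ℝ := Γe ^ (ε / 2) * t with hbdef
  have hb : 0 < b := by positivity
  set g : ℝ → ℝ := fun w => Real.exp (-(b * w ^ (ε / 2))) with hgdef
  set a : ℕ → ℝ := fun n => ∫ w in (0:ℝ)..(n:ℝ), g w with hadef
  set L : ℝ := t ^ (-(2 / ε)) with hLdef
  have hL : 0 < L := Real.rpow_pos_of_pos ht _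
  have hval : b ^ (-(2/ε)) * Γe = L := by
    have h1 : b ^ (-(2/ε)) = Γe⁻¹ * t ^ (-(2/ε)) := by
      rw [hbdef, Real.mul_rpow (by positivity) ht.le, ← Real.rpow_mul hΓ.le,
        show (ε/2) * (-(2/ε)) = -1 by field_simp, Real.rpow_neg_one]
    rw [h1, hLdef]
    field_simp
  have ha : Tendsto a atTop (nhds L) := by
    rw [← hval]
    exact tail_tendsto hε hb
  have hmain := tendsto_pow_exp_neg hL a ha
  refine Tendsto.congr' ?_ hmain
  filter_upwards [eventually_ge_atTop 1] with n hn
  set y : ℝ := c * Γe ^ (ε / 2) * (n : ℝ) ^ (ε / 2) * t with hydef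
  have hnpos : (0:ℝ) < (n:ℝ) := by exact_mod_cast hn
  have hy : 0 < y := by
    have : (0:ℝ) < (n:ℝ) ^ (ε/2) := Real.rpow_pos_of_pos hnpos _
    positivity
  -- event identity
  have hevent : {ω | αup n ω ≤ y}
      = ⋂ k ∈ Finset.Icc 1 n, {ω | c * X (0, k) ω ^ (-(ε / 2)) * X (1, k) ω ≤ y} := by
    ext ω
    simp only [Set.mem_setOf_eq, Set.mem_iInter]
    rw [hαup]
    simp only [maxIcc]
    haveI hne : Nonempty ((Finset.Icc 1 n : Finset ℕ) : Type) :=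
      Finset.nonempty_coe_sort.mpr (Finset.nonempty_Icc.mpr hn)
    rw [ciSup_le_iff (Set.Finite.bddAbove (Set.finite_range _))]
    constructor
    · intro h k hk
      have := h ⟨k, hk⟩
      simpa only [hα, hUX, hGX] using this
    · intro h k
      obtain ⟨k, hk⟩ := k
      simp only [hα, hUX, hGX]
      exact h k hk
  set I : ℝ := ∫ u in Set.Ioc (0:ℝ) 1, Real.exp (-(y / c * u ^ (ε / 2))) with hIdef
  have hcdf : ∀ k : ℕ, P {ω | c * X (0, k) ω ^ (-(ε / 2)) * X (1, k) ω ≤ y}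
      = ENNReal.ofReal (1 - I) := by
    intro k
    have hUm : Measurable (U k) := by rw [hUX]; exact hXmeas _
    have hGm : Measurable (G k) := by rw [hGX]; exact hXmeas _
    have hIndepUG : IndepFun (U k) (G k) P := by
      rw [hUX, hGX]
      exact hXindep.indepFun (by simp [Prod.ext_iff, Fin.ext_iff])
    have hcd := cdf_alpha P ε c hε hc (U k) (G k) hUm hGm hIndepUG (hUdist k) (hGdist k) y hy
    rw [← hcd]
    congr 1
    ext ω
    simp [hUX, hGX]
  have hPeq : P {ω | αup n ω ≤ y} = ENNReal.ofReal (1 - I) ^ n := by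
    rw [hevent, meas_biInter_alpha P ε c X hXmeas hXindep y (Finset.Icc 1 n)]
    simp only [hcdf]
    rw [Finset.prod_const]
    congr 1
    simp [Nat.card_Icc]
  -- integrability of the exponential integrand
  have hmeasExp : Measurable fun u : ℝ => Real.exp (-(y / c * u ^ (ε / 2))) :=
    (((measurable_rpow_const' (ε/2)).const_mul (y/c)).neg).exp
  have hcont : ∀ u ∈ Set.Ioc (0:ℝ) 1, Real.exp (-(y / c * u ^ (ε / 2))) ≤ 1 := by
    intro u hu
    rw [Real.exp_le_one_iff]
    have h1 : (0:ℝ) ≤ u ^ (ε/2) := Real.rpow_nonneg hu.1.le _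
    have h2 : (0:ℝ) ≤ y / c * u ^ (ε/2) := mul_nonneg (div_nonneg hy.le hc.le) h1
    linarith
  have hIntExp : IntegrableOn (fun u : ℝ => Real.exp (-(y / c * u ^ (ε / 2))))
      (Set.Ioc (0:ℝ) 1) volume := by
    refine Measure.integrableOn_of_bounded (M := 1) (by simp) hmeasExp.aestronglyMeasurable ?_
    filter_upwards [self_mem_ae_restrict measurableSet_Ioc] with u hu
    have h1 := hcont u hu
    have h2 : 0 < Real.exp (-(y / c * u ^ (ε / 2))) := Real.exp_pos _
    rw [Real.norm_eq_abs, abs_le]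
    constructor <;> [linarith; linarith]
  have hIle : I ≤ 1 := by
    rw [hIdef]
    calc (∫ u in Set.Ioc (0:ℝ) 1, Real.exp (-(y / c * u ^ (ε / 2))))
        ≤ ∫ _u in Set.Ioc (0:ℝ) 1, (1:ℝ) :=
          setIntegral_mono_on hIntExp (integrableOn_const (by simp))
            measurableSet_Ioc hcont
      _ = 1 := by simp
  have hIan : I = a n / (n : ℝ) := by
    have hcongr : I = ∫ u in Set.Ioc (0:ℝ) 1, g ((n:ℝ) * u) := by
      rw [hIdef]
      refine setIntegral_congr_fun measurableSet_Ioc (fun u hu => ?_)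
      simp only [hgdef]
      congr 1
      have h1 : y / c = Γe ^ (ε/2) * (n:ℝ) ^ (ε/2) * t := by
        rw [hydef]; field_simp
      rw [h1, hbdef, Real.mul_rpow (Nat.cast_nonneg n) hu.1.le]
      ring
    rw [hcongr, eq_div_iff (ne_of_gt hnpos), mul_comm,
      ← intervalIntegral.integral_of_le zero_le_one]
    have h3 := intervalIntegral.mul_integral_comp_mul_left (a := (0:ℝ)) (b := 1)
      (c := (n:ℝ)) (f := g)
    simpa [hadef] using h3
  have htoReal : (P {ω | αup n ω ≤ y}).toReal = (1 - I) ^ n := by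
    rw [hPeq, ENNReal.toReal_pow, ENNReal.toReal_ofReal (by linarith)]
  rw [htoReal, hIan]
end
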